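/- Let X be a real-valued random variable with mean zero, taking values in [-1/2, 1/2], and suppose E[h(X + 1/2)] ≥ ρ for some ρ ∈ [0,1], where h(p) = -p·log₂ p - (1-p)·log₂(1-p) is the binary entropy function. Then E[X²] ≤ (1/2 - h⁻¹(ρ))², where h⁻¹ is the inverse of h restricted to [0,1/2]. -/

import Mathlib

open MeasureTheory Real

open Set

/-- Binary entropy in base 2. -/
noncomputable def binEnt (p : ℝ) : ℝ := -(p * Real.logb 2 p) - (1 - p) * Real.logb 2 (1 - p)


noncomputable def Mf (x : ℝ) : ℝ := Real.log (1+2*x) - Real.log (1-2*x)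

lemma Mf_zero : Mf 0 = 0 := by simp [Mf]

lemma Mf_hasDerivAt {x : ℝ} (h1 : x ∈ Ioo (-(1/2):ℝ) (1/2)) :
    HasDerivAt Mf (4/(1-4*x^2)) x := by
  obtain ⟨hl, hr⟩ := h1
  have h1 : (0:ℝ) < 1+2*x := by linarith
  have h2 : (0:ℝ) < 1-2*x := by linarith
  have d1 : HasDerivAt (fun x : ℝ => 1+2*x) 2 x := by
    simpa using ((hasDerivAt_id x).const_mul 2).const_add 1
  have d2 : HasDerivAt (fun x : ℝ => 1-2*x) (-2) x := by
    simpa using ((hasDerivAt_id x).const_mul 2).const_sub 1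
  have D1 := (Real.hasDerivAt_log (ne_of_gt h1)).comp x d1
  have D2 := (Real.hasDerivAt_log (ne_of_gt h2)).comp x d2
  have := D1.sub D2
  have h3 : (1-4*x^2) ≠ 0 := by nlinarith
  refine this.congr_deriv ?_
  rw [show (1-4*x^2:ℝ) = (1+2*x)*(1-2*x) by ring]
  field_simp [h1.ne', h2.ne']
  ring

lemma Mf_continuousOn : ContinuousOn Mf (Ico (0:ℝ) (1/2)) := by
  apply ContinuousOn.sub
  · apply ContinuousOn.log (by fun_prop)
    intro x hx
    have := hx.1
    positivity
  · apply ContinuousOn.log (by fun_prop)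
    intro x hx
    have := hx.2
    intro h
    simp only [mem_Ico] at hx
    nlinarith [hx.1, hx.2]

lemma Mf_convexOn : ConvexOn ℝ (Ico (0:ℝ) (1/2)) Mf := by
  have hint : interior (Ico (0:ℝ) (1/2)) = Ioo (0:ℝ) (1/2) := interior_Ico
  have hmono : MonotoneOn (deriv Mf) (interior (Ico (0:ℝ) (1/2))) := by
    rw [hint]
    intro a ha b hb hab
    have hda := (Mf_hasDerivAt (x := a) ⟨by linarith [ha.1], ha.2⟩).deriv
    have hdb := (Mf_hasDerivAt (x := b) ⟨by linarith [hb.1], hb.2⟩).deriv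
    rw [hda, hdb]
    have h1 : (0:ℝ) < 1-4*b^2 := by nlinarith [hb.1, hb.2]
    have h2 : (0:ℝ) < 1-4*a^2 := by nlinarith [ha.1, ha.2]
    apply div_le_div_of_nonneg_left (by norm_num) h1
    nlinarith [mul_nonneg (sub_nonneg.2 hab) (by linarith [ha.1] : (0:ℝ) ≤ b + a)]
  exact hmono.convexOn_of_deriv (convex_Ico _ _) Mf_continuousOn
    (fun x hx => by
      rw [hint] at hx
      exact (Mf_hasDerivAt ⟨by linarith [hx.1], hx.2⟩).differentiableAt.differentiableWithinAt)

lemma Mf_slope {x s : ℝ} (hx0 : 0 < x) (hxs : x ≤ s) (hs : s < 1/2) :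
    Mf x * s ≤ Mf s * x := by
  have h := Mf_convexOn.secant_mono (a := 0) (x := x) (y := s)
    ⟨le_refl 0, by norm_num⟩ ⟨by linarith, by linarith⟩ ⟨by linarith, hs⟩
    (by linarith) (by linarith) hxs
  rw [Mf_zero] at h
  simp only [sub_zero] at h
  have hs0 : 0 < s := lt_of_lt_of_le hx0 hxs
  rw [div_le_div_iff₀ hx0 hs0] at h
  linarith

lemma Mf_lower {x : ℝ} (hx0 : 0 ≤ x) (hx : x < 1/2) : 4*x ≤ Mf x := by
  have hmono : MonotoneOn (fun x => Mf x - 4*x) (Ico (0:ℝ) (1/2)) := by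
    apply monotoneOn_of_deriv_nonneg (convex_Ico _ _)
      (Mf_continuousOn.sub (by fun_prop))
    · intro y hy
      rw [interior_Ico] at hy
      exact ((Mf_hasDerivAt ⟨by linarith [hy.1], hy.2⟩).sub
        (by simpa using ((hasDerivAt_id y).const_mul 4))).differentiableAt.differentiableWithinAt
    · intro y hy
      rw [interior_Ico] at hy
      have hd := ((Mf_hasDerivAt (x := y) ⟨by linarith [hy.1], hy.2⟩).sub
        (by simpa using ((hasDerivAt_id y).const_mul 4) : HasDerivAt (fun x : ℝ => 4*x) 4 y)).deriv
      rw [hd]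
      have h1 : (0:ℝ) < 1-4*y^2 := by nlinarith [hy.1, hy.2]
      rw [sub_nonneg, le_div_iff₀ h1]
      nlinarith [hy.1]
  have := hmono ⟨le_refl 0, by norm_num⟩ ⟨hx0, hx⟩ hx0
  simp [Mf_zero] at this
  linarith


lemma binEnt_eq (p : ℝ) : binEnt p = (-(p * Real.log p) - (1-p) * Real.log (1-p))/Real.log 2 := by
  simp only [binEnt, Real.logb]
  field_simp

lemma binEnt_continuous : Continuous binEnt := by
  have h : Continuous fun p : ℝ => (-(p * Real.log p) - (1-p) * Real.log (1-p))/Real.log 2 := by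
    apply Continuous.div_const
    apply Continuous.sub
    · exact (Real.continuous_mul_log).neg
    · exact Real.continuous_mul_log.comp (continuous_const.sub continuous_id)
  convert h using 1
  funext p
  exact binEnt_eq p

lemma binEnt_symm (p : ℝ) : binEnt (1-p) = binEnt p := by
  simp only [binEnt]
  ring_nf

lemma binEnt_nonneg {p : ℝ} (h0 : 0 ≤ p) (h1 : p ≤ 1) : 0 ≤ binEnt p := by
  have l1 : Real.logb 2 p ≤ 0 := Real.logb_nonpos (by norm_num) h0 h1
  have l2 : Real.logb 2 (1-p) ≤ 0 := Real.logb_nonpos (by norm_num) (by linarith) (by linarith)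
  simp only [binEnt]
  nlinarith [mul_nonneg h0 (neg_nonneg.2 l1), mul_nonneg (by linarith : (0:ℝ) ≤ 1-p) (neg_nonneg.2 l2)]

lemma neg_mul_log_le {q : ℝ} (h0 : 0 ≤ q) : -(q * Real.log q) ≤ 1 - q := by
  rcases eq_or_lt_of_le h0 with h | h
  · simp [← h]
  · have := Real.log_le_sub_one_of_pos (x := 1/q) (by positivity)
    have hlog : Real.log (1/q) = -Real.log q := by
      rw [one_div, Real.log_inv]
    rw [hlog] at this
    have h2 : q * (-Real.log q) ≤ q * (1/q - 1) := by
      apply mul_le_mul_of_nonneg_left this h0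
    have : q * (1/q - 1) = 1 - q := by field_simp
    nlinarith [h2]

lemma binEnt_le_two {p : ℝ} (h0 : 0 ≤ p) (h1 : p ≤ 1) : binEnt p ≤ 2 := by
  rw [binEnt_eq]
  have b1 := neg_mul_log_le h0
  have b2 := neg_mul_log_le (q := 1-p) (by linarith)
  have hl2 : (0.6931471803 : ℝ) < Real.log 2 := Real.log_two_gt_d9
  rw [div_le_iff₀ (by linarith)]
  nlinarith

lemma binEnt_hasDerivAt {x : ℝ} (hx : x ∈ Ioo (-(1/2):ℝ) (1/2)) :
    HasDerivAt (fun x => binEnt (1/2 + x))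
      ((Real.log (1/2-x) - Real.log (1/2+x))/Real.log 2) x := by
  obtain ⟨hl, hr⟩ := hx
  have h1 : (0:ℝ) < 1/2+x := by linarith
  have h2 : (0:ℝ) < 1/2-x := by linarith
  have d1 : HasDerivAt (fun x : ℝ => 1/2+x) 1 x := by simpa using (hasDerivAt_id x).const_add (1/2:ℝ)
  have d2 : HasDerivAt (fun x : ℝ => 1/2-x) (-1) x := by simpa using (hasDerivAt_id x).const_sub (1/2:ℝ)
  have D1 : HasDerivAt (fun x : ℝ => (1/2+x) * Real.log (1/2+x)) (Real.log (1/2+x) + 1) x := by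
    simpa [Function.comp_def] using (Real.hasDerivAt_mul_log (ne_of_gt h1)).comp x d1
  have D2 : HasDerivAt (fun x : ℝ => (1/2-x) * Real.log (1/2-x)) (-(Real.log (1/2-x) + 1)) x := by
    simpa [Function.comp_def] using (Real.hasDerivAt_mul_log (ne_of_gt h2)).comp x d2
  have D : HasDerivAt (fun x : ℝ => (-((1/2+x) * Real.log (1/2+x)) - (1/2-x) * Real.log (1/2-x))/Real.log 2)
      ((-(Real.log (1/2+x) + 1) - -(Real.log (1/2-x) + 1))/Real.log 2) x :=
    (D1.neg.sub D2).div_const _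
  have heq : (fun x : ℝ => (-((1/2+x) * Real.log (1/2+x)) - (1/2-x) * Real.log (1/2-x))/Real.log 2)
      = fun x => binEnt (1/2 + x) := by
    funext y
    rw [binEnt_eq]
    ring_nf
  rw [heq] at D
  convert D using 1
  ring

lemma logdiff {x : ℝ} (hx : x ∈ Ioo (-(1/2):ℝ) (1/2)) :
    Real.log (1/2-x) - Real.log (1/2+x) = -(Mf x) := by
  obtain ⟨hl, hr⟩ := hx
  have h1 : (0:ℝ) < 1+2*x := by linarith
  have h2 : (0:ℝ) < 1-2*x := by linarith
  rw [show (1/2-x : ℝ) = (1-2*x)/2 by ring, show (1/2+x:ℝ) = (1+2*x)/2 by ring,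
    Real.log_div (ne_of_gt h2) two_ne_zero, Real.log_div (ne_of_gt h1) two_ne_zero]
  simp only [Mf]
  ring

lemma phi_le {c s : ℝ} (hs0 : 0 ≤ s) (hs : s < 1/2) (hc : 0 < c)
    (hd : ∀ x ∈ Ioo (0:ℝ) (1/2), x ≤ s → 0 ≤ -(Mf x)/Real.log 2 + 2*c*x)
    (hd' : ∀ x ∈ Ioo (0:ℝ) (1/2), s ≤ x → -(Mf x)/Real.log 2 + 2*c*x ≤ 0) :
    ∀ x ∈ Icc (-(1/2):ℝ) (1/2), binEnt (1/2 + x) + c*x^2 ≤ binEnt (1/2+s) + c*s^2 := by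
  set φ : ℝ → ℝ := fun x => binEnt (1/2 + x) + c*x^2 with hφ
  have hcont : Continuous φ := by
    apply Continuous.add
    · exact binEnt_continuous.comp (by fun_prop)
    · fun_prop
  have hDer : ∀ x ∈ Ioo (-(1/2):ℝ) (1/2),
      HasDerivAt φ (-(Mf x)/Real.log 2 + 2*c*x) x := by
    intro x hx
    have D := (binEnt_hasDerivAt hx).add
      (((hasDerivAt_pow 2 x).const_mul c) : HasDerivAt (fun x : ℝ => c*x^2) (c*(2*x^1)) x)
    rw [logdiff hx] at D
    refine D.congr_deriv ?_
    ring
  have hmono : MonotoneOn φ (Icc (0:ℝ) s) := by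
    apply monotoneOn_of_deriv_nonneg (convex_Icc _ _) hcont.continuousOn
    · intro x hx
      rw [interior_Icc] at hx
      exact (hDer x ⟨by linarith [hx.1], by linarith [hx.2]⟩).differentiableAt.differentiableWithinAt
    · intro x hx
      rw [interior_Icc] at hx
      rw [(hDer x ⟨by linarith [hx.1], by linarith [hx.2]⟩).deriv]
      exact hd x ⟨hx.1, by linarith [hx.2]⟩ (le_of_lt hx.2)
  have hanti : AntitoneOn φ (Icc s (1/2:ℝ)) := by
    apply antitoneOn_of_deriv_nonpos (convex_Icc _ _) hcont.continuousOn
    · intro x hx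
      rw [interior_Icc] at hx
      exact (hDer x ⟨by linarith [hx.1], hx.2⟩).differentiableAt.differentiableWithinAt
    · intro x hx
      rw [interior_Icc] at hx
      rw [(hDer x ⟨by linarith [hx.1], hx.2⟩).deriv]
      exact hd' x ⟨by linarith [hx.1], hx.2⟩ (le_of_lt hx.1)
  intro x hx
  have hsym : φ x = φ |x| := by
    rcases abs_cases x with ⟨h, _⟩ | ⟨h, hneg⟩
    · rw [h]
    · rw [h, hφ]
      simp only
      rw [show (1/2 + -x : ℝ) = 1 - (1/2 + x) by ring, binEnt_symm]
      ring_nf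
  show φ x ≤ φ s
  rw [hsym]
  have hy0 : 0 ≤ |x| := abs_nonneg x
  have hy1 : |x| ≤ 1/2 := abs_le.2 ⟨hx.1, hx.2⟩
  rcases le_total |x| s with h | h
  · exact hmono ⟨hy0, h⟩ ⟨hs0, le_refl s⟩ h
  · exact hanti ⟨le_refl s, le_of_lt hs⟩ ⟨h, hy1⟩ h

lemma key_ineq {s : ℝ} (hs0 : 0 ≤ s) (hs : s < 1/2) :
    ∃ c : ℝ, 0 < c ∧ ∀ x ∈ Icc (-(1/2):ℝ) (1/2),
      binEnt (x + 1/2) ≤ binEnt (1/2+s) - c*(x^2 - s^2) := by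
  have hl2 : 0 < Real.log 2 := Real.log_pos one_lt_two
  rcases eq_or_lt_of_le hs0 with h | hspos
  · refine ⟨1, one_pos, fun x hx => ?_⟩
    have := phi_le hs0 hs one_pos
      (fun y hy hys => by exfalso; rw [← h] at hys; linarith [hy.1])
      (fun y hy hys => by
        have hMy := Mf_lower (le_of_lt hy.1) hy.2
        have hlog2le : Real.log 2 ≤ 1 := by
          have := Real.log_le_sub_one_of_pos (x := 2) (by norm_num)
          linarith
        have h1 : 2*1*y ≤ (Mf y)/Real.log 2 := by
          rw [le_div_iff₀ hl2]
          nlinarith [hy.1]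
        have h2 : -(Mf y)/Real.log 2 = -((Mf y)/Real.log 2) := by ring
        rw [h2]
        linarith) x hx
    have hcomm : binEnt (x + 1/2) = binEnt (1/2 + x) := by rw [add_comm]
    rw [hcomm]
    linarith [this]
  · refine ⟨Mf s/(2*s*Real.log 2),
      div_pos (lt_of_lt_of_le (by linarith) (Mf_lower hs0 hs))
        (mul_pos (mul_pos two_pos hspos) hl2), fun x hx => ?_⟩
    set c := Mf s/(2*s*Real.log 2) with hc
    have hMs : 0 < Mf s := lt_of_lt_of_le (by linarith) (Mf_lower hs0 hs)
    have hcpos : 0 < c := by rw [hc]; positivity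
    have := phi_le hs0 hs hcpos
      (fun y hy hys => by
        have key := Mf_slope hy.1 hys hs
        have e : -(Mf y)/Real.log 2 + 2*c*y = (Mf s * y - Mf y * s)/(s * Real.log 2) := by
          rw [hc]; field_simp; ring
        rw [e]
        apply div_nonneg (by linarith) (by positivity))
      (fun y hy hys => by
        have key := Mf_slope hspos hys hy.2
        have e : -(Mf y)/Real.log 2 + 2*c*y = (Mf s * y - Mf y * s)/(s * Real.log 2) := by
          rw [hc]; field_simp; ring
        rw [e]
        apply div_nonpos_of_nonpos_of_nonneg (by linarith) (by positivity)) x hx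
    have hcomm : binEnt (x + 1/2) = binEnt (1/2 + x) := by rw [add_comm]
    rw [hcomm]
    linarith [this]

theorem stmt_0 {Ω : Type*} [MeasurableSpace Ω] (μ : Measure Ω) [IsProbabilityMeasure μ]
    (X : Ω → ℝ) (hXmeas : Measurable X)
    (hbd : ∀ᵐ ω ∂μ, X ω ∈ Set.Icc (-(1/2) : ℝ) (1/2))
    (hmean : ∫ ω, X ω ∂μ = 0)
    (ρ : ℝ) (hρ : ρ ∈ Set.Icc (0:ℝ) 1)
    (hent : ρ ≤ ∫ ω, binEnt (X ω + 1/2) ∂μ)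
    (p : ℝ) (hp : p ∈ Set.Icc (0:ℝ) (1/2)) (hhp : binEnt p = ρ) :
    ∫ ω, (X ω)^2 ∂μ ≤ (1/2 - p)^2 := by
  have int2 : Integrable (fun ω => (X ω)^2) μ :=
    ⟨((hXmeas.pow_const 2).aestronglyMeasurable),
      HasFiniteIntegral.of_bounded (C := 1/4) (hbd.mono fun ω h => by
        rw [Real.norm_eq_abs, abs_of_nonneg (sq_nonneg _)]
        nlinarith [h.1, h.2])⟩
  rcases eq_or_lt_of_le hp.1 with hp0 | hppos
  · calc ∫ ω, (X ω)^2 ∂μ ≤ ∫ _ω, (1/4:ℝ) ∂μ := by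
          apply integral_mono_ae int2 (integrable_const _)
          exact hbd.mono fun ω h => by nlinarith [h.1, h.2]
      _ = 1/4 := by simp
      _ = (1/2 - p)^2 := by rw [← hp0]; norm_num
  · set s : ℝ := 1/2 - p with hsdef
    have hs0 : 0 ≤ s := by rw [hsdef]; linarith [hp.2]
    have hs : s < 1/2 := by rw [hsdef]; linarith
    obtain ⟨c, hcpos, hkey⟩ := key_ineq hs0 hs
    have hbent : binEnt (1/2 + s) = ρ := by
      rw [show (1/2 + s : ℝ) = 1 - p by rw [hsdef]; ring, binEnt_symm, hhp]
    have meas1 : Measurable fun ω => binEnt (X ω + 1/2) :=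
      binEnt_continuous.measurable.comp (hXmeas.add_const _)
    have int1 : Integrable (fun ω => binEnt (X ω + 1/2)) μ := ⟨meas1.aestronglyMeasurable,
      HasFiniteIntegral.of_bounded (C := 2) (hbd.mono fun ω h => by
        rw [Real.norm_eq_abs, abs_le]
        refine ⟨?_, binEnt_le_two (by linarith [h.1]) (by linarith [h.2])⟩
        have := binEnt_nonneg (p := X ω + 1/2) (by linarith [h.1]) (by linarith [h.2])
        linarith)⟩
    have intR : Integrable (fun ω => binEnt (1/2+s) - c * ((X ω)^2 - s^2)) μ :=
      (integrable_const _).sub ((int2.sub (integrable_const _)).const_mul c)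
    have hmono2 : ∫ ω, binEnt (X ω + 1/2) ∂μ
        ≤ ∫ ω, (binEnt (1/2+s) - c * ((X ω)^2 - s^2)) ∂μ :=
      integral_mono_ae int1 intR (hbd.mono fun ω h => hkey _ h)
    have hintc : Integrable (fun ω => c * ((X ω)^2 - s^2)) μ :=
      (int2.sub (integrable_const _)).const_mul c
    have hIR : ∫ ω, (binEnt (1/2+s) - c * ((X ω)^2 - s^2)) ∂μ
        = binEnt (1/2+s) - c * ((∫ ω, (X ω)^2 ∂μ) - s^2) := by
      have e1 : ∫ ω, (binEnt (1/2+s) - c * ((X ω)^2 - s^2)) ∂μ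
          = (∫ _ω, binEnt (1/2+s) ∂μ) - ∫ ω, c * ((X ω)^2 - s^2) ∂μ :=
        integral_sub (integrable_const _) hintc
      have e2 : ∫ ω, c * ((X ω)^2 - s^2) ∂μ = c * ∫ ω, ((X ω)^2 - s^2) ∂μ :=
        integral_const_mul c _
      have e3 : ∫ ω, ((X ω)^2 - s^2) ∂μ = (∫ ω, (X ω)^2 ∂μ) - s^2 := by
        rw [integral_sub int2 (integrable_const _)]
        simp
      rw [e1, e2, e3]
      simp
    have final : ρ ≤ ρ - c * ((∫ ω, (X ω)^2 ∂μ) - s^2) := by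
      nth_rewrite 2 [← hbent]
      rw [← hIR]
      exact le_trans hent hmono2
    have h1 : c * ((∫ ω, (X ω)^2 ∂μ) - s^2) ≤ 0 := by linarith
    have h2 : (∫ ω, (X ω)^2 ∂μ) - s^2 ≤ 0 := by
      by_contra hcon
      push_neg at hcon
      nlinarith
    calc ∫ ω, (X ω)^2 ∂μ ≤ s^2 := by linarith
      _ = (1/2 - p)^2 := by rw [hsdef]
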